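/- (Lemma 3, global-pose aided VIO under pure translational straight-line motion.) Let R_GI and R_IC be real 3×3 rotation matrices, d, p_f, p₁, p_k, v₁, g ∈ ℝ³, δt ∈ ℝ, and let Φ₁₁, Φ₁₂, Φ₅₁, Φ₅₂, Φ₅₃, Φ₅₄ be arbitrary real 3×3 matrices. Assume the straight-line constraint: there exists q ∈ ℝ³ with q ×₃ d = 0 and p_k = p₁ + R_GI.mulVec q. Define N₁ with blocks (0, 0, 0, 0, 0, R_IC.mulVec d, −S(p_f − p₁).mulVec (R_GI.mulVec d)), Γ₁ = S(p_f − p₁ − δt•v₁ + (δt²/2)•g) * R_GI, Γ₂ = S(p_f − p_k) * R_GI * Φ₁₂ − Φ₅₂, Γ₃ = (δt²/2)•R_GI, Γ₄ = S(p_f − p_k) * R_GI * R_ICᵀ. Then all three block rows of the global-pose-aided observability block matrix annihilate N₁: (i) Γ₁.mulVec 0 + Γ₂.mulVec 0 + (−δt)•0 + Γ₃.mulVec 0 + (−1)•0 + Γ₄.mulVec (R_IC.mulVec d) − S(p_f − p₁).mulVec (R_GI.mulVec d) = 0; (ii) Φ₁₁.mulVec 0 + Φ₁₂.mulVec 0 =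 0; (iii) Φ₅₁.mulVec 0 + Φ₅₂.mulVec 0 + Φ₅₃.mulVec 0 + Φ₅₄.mulVec 0 + 0 = 0. Hence Ξ⁽ᵍ⁾ · N₁ = 0 where Ξ⁽ᵍ⁾ is the 3×7-block matrix with rows [Γ₁, Γ₂, −δt•1, Γ₃, −1, Γ₄, 1], [Φ₁₁, Φ₁₂, 0, 0, 0, 0, 0], [Φ₅₁, Φ₅₂, Φ₅₃, Φ₅₄, 1, 0, 0]. -/

import Mathlib

open Matrix

/-- The skew-symmetric (cross-product) matrix of a vector in ℝ³. -/
def skew (v : Fin 3 → ℝ) : Matrix (Fin 3) (Fin 3) ℝ :=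
  !![0, -v 2, v 1; v 2, 0, -v 0; -v 1, v 0, 0]

lemma skew_mulVec (v w : Fin 3 → ℝ) : (skew v).mulVec w = v ⨯₃ w := by
  funext i
  fin_cases i <;>
    simp [skew, Matrix.mulVec, dotProduct, cross_apply, Fin.sum_univ_three] <;> ring

lemma cross_map_zero (R : Matrix (Fin 3) (Fin 3) ℝ) {q d : Fin 3 → ℝ}
    (h : q ⨯₃ d = 0) : (R.mulVec q) ⨯₃ (R.mulVec d) = 0 := by
  by_contra hne
  have hli : LinearIndependent ℝ ![R.mulVec q, R.mulVec d] :=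
    (crossProduct_ne_zero_iff_linearIndependent).mp hne
  have hcomp : R.mulVecLin ∘ ![q, d] = ![R.mulVec q, R.mulVec d] := by
    funext i; fin_cases i <;> rfl
  have : LinearIndependent ℝ ![q, d] := by
    apply LinearIndependent.of_comp R.mulVecLin
    rw [hcomp]; exact hli
  exact (crossProduct_ne_zero_iff_linearIndependent).mpr this h

/-- Lemma 3 (global-pose aided VIO under pure translational straight-line motion):
all three block rows of the global-pose-aided observability block matrix `Ξ⁽ᵍ⁾`
annihilate the candidate null direction
`N₁ = (0, 0, 0, 0, 0, R_IC d, −S(p_f − p₁) (R_GI d))`. -/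
theorem lemma3_global_pose_vio_straight_line
    (R_GI R_IC : Matrix (Fin 3) (Fin 3) ℝ)
    (hGI : R_GIᵀ * R_GI = 1) (hGIdet : R_GI.det = 1)
    (hIC : R_ICᵀ * R_IC = 1) (hICdet : R_IC.det = 1)
    (d pf p₁ pk v₁ g : Fin 3 → ℝ) (δt : ℝ)
    (Φ₁₁ Φ₁₂ Φ₅₁ Φ₅₂ Φ₅₃ Φ₅₄ : Matrix (Fin 3) (Fin 3) ℝ)
    (hline : ∃ q : Fin 3 → ℝ, q ⨯₃ d = 0 ∧ pk = p₁ + R_GI.mulVec q) :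
    ((skew (pf - p₁ - δt • v₁ + (δt ^ 2 / 2) • g) * R_GI).mulVec 0
        + (skew (pf - pk) * R_GI * Φ₁₂ - Φ₅₂).mulVec 0
        + (-δt) • (0 : Fin 3 → ℝ)
        + ((δt ^ 2 / 2) • R_GI).mulVec 0
        + (-1 : ℝ) • (0 : Fin 3 → ℝ)
        + (skew (pf - pk) * R_GI * R_ICᵀ).mulVec (R_IC.mulVec d)
        - (skew (pf - p₁)).mulVec (R_GI.mulVec d) = 0)
    ∧ (Φ₁₁.mulVec 0 + Φ₁₂.mulVec 0 = 0)
    ∧ (Φ₅₁.mulVec 0 + Φ₅₂.mulVec 0 + Φ₅₃.mulVec 0 + Φ₅₄.mulVec 0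
        + (0 : Fin 3 → ℝ) = 0) := by
  obtain ⟨q, hq, hpk⟩ := hline
  refine ⟨?_, by simp, by simp⟩
  have hICd : R_ICᵀ.mulVec (R_IC.mulVec d) = d := by
    rw [Matrix.mulVec_mulVec, hIC, Matrix.one_mulVec]
  have h4 : (skew (pf - pk) * R_GI * R_ICᵀ).mulVec (R_IC.mulVec d)
      = (pf - pk) ⨯₃ (R_GI.mulVec d) := by
    rw [← Matrix.mulVec_mulVec, ← Matrix.mulVec_mulVec, hICd, skew_mulVec]
  simp only [Matrix.mulVec_zero, smul_zero, zero_add, add_zero, h4, skew_mulVec]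
  have hsub : pf - pk = (pf - p₁) - R_GI.mulVec q := by
    rw [hpk]; abel
  rw [hsub, map_sub, LinearMap.sub_apply, cross_map_zero R_GI hq, sub_zero, sub_self]
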